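/- Under the self-supervised model, condition on Y = −1 so that (Z − k₂)/(k₁βσ₁²) ∼ χ²_d. If the threshold satisfies b ≤ dk₁(β+1)σ₁²/2 + k₂ + δ·dk₁(β+1)σ₁²/2 for some δ ∈ (0, (β−1)/(β+1)), then P(Z < b | Y=−1) ≤ exp(−d(β−1−δ(β+1))²/(32β²)). -/

import Mathlib

open MeasureTheory ProbabilityTheory Real
open scoped ENNReal NNReal

/-- The chi-squared distribution with `d` degrees of freedom, realized as the law of the
sum of `d` squared i.i.d. standard normals. -/
noncomputable def chiSq (d : ℕ) : Measure ℝ :=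
  Measure.map (fun w : Fin d → ℝ => ∑ i, (w i) ^ 2)
    (Measure.pi fun _ : Fin d => gaussianReal 0 1)

-- Lemma A: log bound
lemma logA {t : ℝ} (h0 : 0 ≤ t) (h1 : t < 1) : Real.log (1 - t) ≤ -t - t^2/2 := by
  have key : MonotoneOn (fun u : ℝ => -u - u^2/2 - Real.log (1-u)) (Set.Ico 0 1) := by
    apply monotoneOn_of_hasDerivWithinAt_nonneg (convex_Ico 0 1)
      (f' := fun u => u^2/(1-u))
    · apply ContinuousOn.sub
      · fun_prop
      · apply ContinuousOn.log (by fun_prop)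
        intro x hx
        simp only [Set.mem_Ico] at hx
        linarith
    · intro x hx
      rw [interior_Ico] at hx
      simp only [Set.mem_Ioo] at hx
      have h1x : (1:ℝ) - x ≠ 0 := by linarith
      have : HasDerivAt (fun u : ℝ => -u - u^2/2 - Real.log (1-u))
          (-1 - x + (1-x)⁻¹) x := by
        have hlog : HasDerivAt (fun u : ℝ => Real.log (1-u)) (-(1-x)⁻¹) x := by
          have h := (Real.hasDerivAt_log h1x).comp x
            ((hasDerivAt_id x).const_sub 1)
          exact h.congr_deriv (by ring)
        have hpoly : HasDerivAt (fun u : ℝ => -u - u^2/2) (-1 - x) x := by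
          have := ((hasDerivAt_id x).neg).sub
            (((hasDerivAt_pow 2 x)).div_const 2)
          exact this.congr_deriv (by norm_num)
        have := hpoly.sub hlog
        exact this.congr_deriv (by ring)
      have heq : -1 - x + (1-x)⁻¹ = x^2/(1-x) := by
        field_simp
        ring
      rw [← heq]
      exact this.hasDerivWithinAt
    · intro x hx
      rw [interior_Ico] at hx
      simp only [Set.mem_Ioo] at hx
      have : (0:ℝ) < 1 - x := by linarith
      positivity
  have h := key (Set.mem_Ico.2 ⟨le_refl 0, one_pos⟩) (Set.mem_Ico.2 ⟨h0, h1⟩) h0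
  simp only [Real.log_one] at h
  norm_num at h
  linarith

lemma sumSq_measurable (d : ℕ) : Measurable (fun w : Fin d → ℝ => ∑ i, (w i) ^ 2) :=
  Finset.measurable_sum _ fun i _ => (measurable_pi_apply i).pow measurable_const

instance chiSq_isProb (d : ℕ) : IsProbabilityMeasure (chiSq d) :=
  Measure.isProbabilityMeasure_map (sumSq_measurable d).aemeasurable

lemma gauss_pi_pow (d : ℕ) (f : ℝ → ℝ) :
    ∫ w : Fin d → ℝ, ∏ i, f (w i) ∂(Measure.pi fun _ : Fin d => gaussianReal 0 1)
      = (∫ x, f x ∂(gaussianReal 0 1)) ^ d := by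
  letI : MeasureSpace ℝ := ⟨gaussianReal 0 1⟩
  haveI : SigmaFinite (volume : Measure ℝ) :=
    show SigmaFinite (gaussianReal 0 1) from inferInstance
  have h := MeasureTheory.integral_fintype_prod_eq_pow (𝕜 := ℝ) (ι := Fin d) f (μ := gaussianReal 0 1)
  rw [Fintype.card_fin] at h
  exact h

lemma gaussB {s : ℝ} (hs : 0 ≤ s) :
    ∫ x, Real.exp (-s * x^2) ∂(gaussianReal 0 1) = (Real.sqrt (1 + 2*s))⁻¹ := by
  rw [gaussianReal_of_var_ne_zero 0 one_ne_zero]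
  have hmeas : Measurable fun x => (gaussianPDFReal 0 1 x).toNNReal :=
    (measurable_gaussianPDFReal 0 1).real_toNNReal
  have hpdf : (gaussianPDF 0 1) = fun x => ((gaussianPDFReal 0 1 x).toNNReal : ℝ≥0∞) := by
    ext x; rfl
  rw [hpdf, integral_withDensity_eq_integral_smul hmeas]
  have hnn : ∀ x : ℝ, 0 ≤ gaussianPDFReal 0 1 x := gaussianPDFReal_nonneg 0 1
  have : ∀ x : ℝ, ((gaussianPDFReal 0 1 x).toNNReal : ℝ) • Real.exp (-s * x^2)
      = (Real.sqrt (2*π))⁻¹ * Real.exp (-(s + 1/2) * x^2) := by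
    intro x
    rw [smul_eq_mul, Real.coe_toNNReal _ (hnn x), gaussianPDFReal]
    push_cast
    rw [mul_one, mul_assoc, ← Real.exp_add]
    ring_nf
  simp_rw [NNReal.smul_def, this]
  rw [integral_const_mul, integral_gaussian]
  rw [← Real.sqrt_inv, ← Real.sqrt_mul (by positivity)]
  congr 1
  have hπ := Real.pi_ne_zero
  have h2 : (1:ℝ) + 2*s ≠ 0 := by positivity
  rw [div_eq_mul_inv]
  field_simp
  rw [← Real.sqrt_mul (by positivity),
    show 1 / (2 * s + 1) * (1 + 2 * s) = (1:ℝ) by rw [add_comm (2 * s)]; exact one_div_mul_cancel h2,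
    Real.sqrt_one]


lemma chiSq_Iic_le (d : ℕ) (x s : ℝ) (hs : 0 ≤ s) :
    (chiSq d (Set.Iic x)).toReal ≤ Real.exp (s * x) * ((Real.sqrt (1 + 2*s))⁻¹) ^ d := by
  set μ : Measure (Fin d → ℝ) := Measure.pi fun _ : Fin d => gaussianReal 0 1 with hμ
  set S : (Fin d → ℝ) → ℝ := fun w => ∑ i, (w i) ^ 2 with hS
  have hSm : Measurable S := sumSq_measurable d
  have hSnn : ∀ w, 0 ≤ S w := fun w => Finset.sum_nonneg fun i _ => sq_nonneg _
  have h_int : Integrable (fun w => Real.exp (-s * S w)) μ := by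
    refine Integrable.mono' (integrable_const 1)
      ((Real.measurable_exp.comp ((measurable_const.mul hSm))).aestronglyMeasurable) ?_
    filter_upwards with w
    rw [Real.norm_eq_abs, abs_of_pos (Real.exp_pos _)]
    exact Real.exp_le_one_iff.2 (by nlinarith [hSnn w])
  have hmap : chiSq d (Set.Iic x) = μ {w | S w ≤ x} := by
    rw [chiSq, Measure.map_apply hSm measurableSet_Iic]; rfl
  rw [hmap]
  have := measure_le_le_exp_mul_mgf (μ := μ) (X := S) x (neg_nonpos.2 hs) h_int
  refine this.trans ?_
  rw [neg_neg, mgf]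
  have : ∫ w, Real.exp (-s * S w) ∂μ = ((Real.sqrt (1 + 2*s))⁻¹) ^ d := by
    have hrw : ∀ w : Fin d → ℝ, Real.exp (-s * S w) = ∏ i, Real.exp (-s * (w i)^2) := by
      intro w
      rw [hS, Finset.mul_sum, Real.exp_sum]
    simp_rw [hrw]
    rw [gauss_pi_pow d (fun y => Real.exp (-s * y^2)), gaussB hs]
  rw [this]


theorem negative_class_error_bound
    {Ω : Type*} [MeasureSpace Ω] [IsProbabilityMeasure (ℙ : Measure Ω)]
    (d : ℕ) (hd : 1 ≤ d) (k₁ k₂ σ₁ β δ b : ℝ)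
    (hk₁ : 0 < k₁) (hk₂ : 0 < k₂) (hσ : 0 < σ₁) (hβ : 3 < β)
    (hδ : 0 < δ) (hδ' : δ < (β - 1) / (β + 1))
    (Z : Ω → ℝ)
    (hZ : Measure.map (fun ω => (Z ω - k₂) / (k₁ * β * σ₁ ^ 2)) ℙ = chiSq d)
    (hb : b ≤ d * k₁ * (β + 1) * σ₁ ^ 2 / 2 + k₂ + δ * (d * k₁ * (β + 1) * σ₁ ^ 2) / 2) :
    (ℙ {ω | Z ω < b}).toReal ≤ Real.exp (-d * (β - 1 - δ * (β + 1)) ^ 2 / (32 * β ^ 2)) := by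
  have hβ0 : (0:ℝ) < β := by linarith
  have hc : (0:ℝ) < k₁ * β * σ₁ ^ 2 := by positivity
  have hβ1 : (0:ℝ) < β + 1 := by linarith
  have htnum : 0 < β - 1 - δ * (β + 1) := by
    have := (lt_div_iff₀ hβ1).1 hδ'
    linarith
  set t : ℝ := (β - 1 - δ * (β + 1)) / (2 * β) with htdef
  have ht0 : 0 < t := div_pos htnum (by linarith)
  have ht1 : t < 1 := by
    rw [htdef, div_lt_one (by linarith)]
    nlinarith [mul_pos hδ hβ1]
  have h1t : 0 < 1 - t := by linarith
  set s : ℝ := t / (2 * (1 - t)) with hsdef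
  have hs : 0 ≤ s := by positivity
  -- aemeasurability of the standardized variable
  have hW : AEMeasurable (fun ω => (Z ω - k₂) / (k₁ * β * σ₁ ^ 2)) ℙ := by
    by_contra h
    rw [Measure.map_of_not_aemeasurable h] at hZ
    have h0 : (0 : Measure ℝ) Set.univ = chiSq d Set.univ := by rw [hZ]
    simp [measure_univ] at h0
  -- rewrite the event
  have hset : {ω | Z ω < b}
      = (fun ω => (Z ω - k₂) / (k₁ * β * σ₁ ^ 2)) ⁻¹' (Set.Iio ((b - k₂) / (k₁ * β * σ₁ ^ 2))) := by
    ext ω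
    simp only [Set.mem_setOf_eq, Set.mem_preimage, Set.mem_Iio]
    rw [div_lt_div_iff_of_pos_right hc, sub_lt_sub_iff_right]
  have h1 : ℙ {ω | Z ω < b} = chiSq d (Set.Iio ((b - k₂) / (k₁ * β * σ₁ ^ 2))) := by
    rw [hset, ← Measure.map_apply_of_aemeasurable hW measurableSet_Iio, hZ]
  -- threshold bound
  have hkey : (d:ℝ) * (1 - t) * (k₁ * β * σ₁ ^ 2)
      = d * k₁ * (β + 1) * σ₁ ^ 2 / 2 + δ * (d * k₁ * (β + 1) * σ₁ ^ 2) / 2 := by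
    rw [htdef]
    field_simp
    ring
  have ha : (b - k₂) / (k₁ * β * σ₁ ^ 2) ≤ (d:ℝ) * (1 - t) := by
    rw [div_le_iff₀ hc]
    linarith [hb, hkey]
  have h2 : ℙ {ω | Z ω < b} ≤ chiSq d (Set.Iic ((d:ℝ) * (1 - t))) := by
    rw [h1]
    exact measure_mono fun y hy => le_trans (le_of_lt hy) ha
  have h3 : (ℙ {ω | Z ω < b}).toReal ≤ (chiSq d (Set.Iic ((d:ℝ) * (1 - t)))).toReal :=
    ENNReal.toReal_mono (measure_ne_top _ _) h2
  refine h3.trans ((chiSq_Iic_le d _ s hs).trans ?_)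
  have h12s : 1 + 2 * s = (1 - t)⁻¹ := by
    rw [hsdef]
    field_simp
    ring
  rw [h12s, Real.sqrt_inv, inv_inv]
  have hexp : Real.sqrt (1 - t) ^ d = Real.exp ((d:ℝ) * (Real.log (1 - t) / 2)) := by
    rw [← Real.log_sqrt h1t.le, ← Real.log_pow, Real.exp_log (by positivity)]
  rw [hexp, ← Real.exp_add]
  apply Real.exp_le_exp.2
  have hst : s * ((d:ℝ) * (1 - t)) = (d:ℝ) * (t / 2) := by
    rw [hsdef]
    field_simp
  have h8 : -(d:ℝ) * (β - 1 - δ * (β + 1)) ^ 2 / (32 * β ^ 2) = -(d:ℝ) * t ^ 2 / 8 := by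
    rw [htdef]
    field_simp
    ring
  have hlog := logA ht0.le ht1
  have hd0 : (0:ℝ) ≤ (d:ℝ) := Nat.cast_nonneg d
  have hmul : (d:ℝ) * Real.log (1 - t) ≤ (d:ℝ) * (-t - t^2/2) :=
    mul_le_mul_of_nonneg_left hlog hd0
  have hsq : 0 ≤ (d:ℝ) * t ^ 2 := by positivity
  rw [hst, h8]
  linarith
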